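/- Let f be a non-zero vector of a metric vector space (V,Q). Then the following are equivalent: (a) the group {δ_{a*,f} : a* ∈ V*, ⟨a*,f⟩ = 0} is contained in O'(V,Q); (b) one of the following holds: (i) Q(f) = 0 and V^⊥ = F·f, or (ii) dim V = 1, or (iii) dim V = 2, Q(f) ≠ 0, dim V^⊥ = 0, and |F| = 2. -/
import Mathlib


/-! Setting: a field `F`, a finite-dimensional `F`-vector space `V`, a quadratic form
`Q : V → F` with polar form `B = QuadraticMap.polar Q` (the bilinear map `Q.polarBilin`),
induced map `D = Q.polarBilin : V →ₗ[F] Module.Dual F V`, and radical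
`V^⊥ = LinearMap.ker Q.polarBilin`. -/

variable {F V : Type*} [Field F] [AddCommGroup V] [Module F V] [FiniteDimensional F V]

/-- The map `δ_{c*,f} : x ↦ x + ⟨c*,x⟩ • f`. -/
def deltaMap (c : Module.Dual F V) (f : V) : V →ₗ[F] V :=
  LinearMap.id + c.smulRight f

/-- The orthogonal group `O(V,Q)`, as a set of linear endomorphisms. -/
def orthSet (Q : QuadraticForm F V) : Set (V →ₗ[F] V) :=
  {φ | Function.Bijective φ ∧ ∀ x, Q (φ x) = Q x}

/-- The weak orthogonal group `O'(V,Q)`: isometries fixing the radical elementwise. -/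
def wOrthSet (Q : QuadraticForm F V) : Set (V →ₗ[F] V) :=
  {φ | Function.Bijective φ ∧ (∀ x, Q (φ x) = Q x) ∧
    ∀ x ∈ LinearMap.ker Q.polarBilin, φ x = x}

/-- The group `Δ(V,f) = {δ_{a*,f} : a* ∈ V*, ⟨a*,f⟩ ≠ -1}`. -/
def deltaSet (f : V) : Set (V →ₗ[F] V) :=
  {φ | ∃ a : Module.Dual F V, a f ≠ -1 ∧ φ = deltaMap a f}

/-- The `Q`-reflection `ξ_r : x ↦ x - Q(r)⁻¹ • B(r,x) • r` in the direction of `r`. -/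
noncomputable def xiMap (Q : QuadraticForm F V) (r : V) : V →ₗ[F] V :=
  LinearMap.id - (Q r)⁻¹ • (Q.polarBilin r).smulRight r

set_option linter.unusedSectionVars false

lemma deltaMap_apply (c : Module.Dual F V) (f x : V) : deltaMap c f x = x + c x • f := rfl

lemma delta_bij (a : Module.Dual F V) (f : V) (ha : a f = 0) :
    Function.Bijective (deltaMap a f) := by
  rw [Function.bijective_iff_has_inverse]
  refine ⟨deltaMap (-a) f, fun x => ?_, fun x => ?_⟩ <;>
    simp [deltaMap_apply, ha, smul_smul, mul_comm]

lemma Q_delta (Q : QuadraticForm F V) (f x : V) (c : F) :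
    Q (x + c • f) = Q x + c * c * Q f + c * QuadraticMap.polar Q f x := by
  have h : QuadraticMap.polar Q x (c • f) = Q (x + c • f) - Q x - Q (c • f) := rfl
  have h2 : Q (c • f) = (c * c) • Q f := QuadraticMap.map_smul Q c f
  have h3 : QuadraticMap.polar Q x (c • f) = c • QuadraticMap.polar Q x f :=
    QuadraticMap.polar_smul_right Q c x f
  have h4 : QuadraticMap.polar Q x f = QuadraticMap.polar Q f x := QuadraticMap.polar_comm Q x f
  rw [h3, h4] at h
  rw [smul_eq_mul] at h h2
  linear_combination -h + h2

lemma exists_dual (f x : V) (hx : x ∉ Submodule.span F {f}) :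
    ∃ a : Module.Dual F V, a f = 0 ∧ a x = 1 := by
  set W := Submodule.span F {f}
  set π := W.mkQ
  have hπx : π x ≠ 0 := by
    simpa [π, Submodule.Quotient.mk_eq_zero] using hx
  have : ¬ ∀ g : Module.Dual F (V ⧸ W), g (π x) = 0 := by
    rw [Module.forall_dual_apply_eq_zero_iff F (π x)]; exact hπx
  push_neg at this
  obtain ⟨g, hg⟩ := this
  refine ⟨(g (π x))⁻¹ • (g ∘ₗ π), ?_, ?_⟩
  · have hfW : f ∈ W := Submodule.mem_span_singleton_self f
    simp [π, (Submodule.Quotient.mk_eq_zero W).mpr hfW]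
  · simp [inv_mul_cancel₀ hg]

/-- Lemma 3.2: for a non-zero vector `f`, the group `{δ_{a*,f} : ⟨a*,f⟩ = 0}` is contained
in `O'(V,Q)` iff (i) `Q f = 0` and `V^⊥ = F·f`, or (ii) `dim V = 1`, or
(iii) `dim V = 2`, `Q f ≠ 0`, `dim V^⊥ = 0` and `|F| = 2`. -/
theorem stmt6 (Q : QuadraticForm F V) (f : V) (hf : f ≠ 0) :
    {φ : V →ₗ[F] V | ∃ a : Module.Dual F V, a f = 0 ∧ φ = deltaMap a f} ⊆ wOrthSet Q ↔
      ((Q f = 0 ∧ LinearMap.ker Q.polarBilin = Submodule.span F {f}) ∨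
        Module.finrank F V = 1 ∨
        (Module.finrank F V = 2 ∧ Q f ≠ 0 ∧
          Module.finrank F ↥(LinearMap.ker Q.polarBilin) = 0 ∧ Cardinal.mk F = 2)) := by
  constructor
  · intro H
    have Hmem : ∀ a : Module.Dual F V, a f = 0 → deltaMap a f ∈ wOrthSet Q :=
      fun a ha => H ⟨a, ha, rfl⟩
    have Hiso : ∀ a : Module.Dual F V, a f = 0 →
        ∀ x, a x * a x * Q f + a x * QuadraticMap.polar Q f x = 0 := by
      intro a ha x
      have h := (Hmem a ha).2.1 x
      rw [deltaMap_apply, Q_delta] at h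
      linear_combination h
    have Hrad : ∀ a : Module.Dual F V, a f = 0 →
        ∀ x ∈ LinearMap.ker Q.polarBilin, a x = 0 := by
      intro a ha x hx
      have h := (Hmem a ha).2.2 x hx
      rw [deltaMap_apply] at h
      have h2 : a x • f = 0 := by
        have := add_eq_left.mp h
        exact this
      rcases smul_eq_zero.mp h2 with h3 | h3
      · exact h3
      · exact absurd h3 hf
    have hradle : LinearMap.ker Q.polarBilin ≤ Submodule.span F {f} := by
      intro v hv
      by_contra hvs
      obtain ⟨a, ha0, ha1⟩ := exists_dual f v hvs
      have := Hrad a ha0 v hv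
      rw [ha1] at this
      exact one_ne_zero this
    have key : ∀ x, x ∉ Submodule.span F {f} →
        ∀ t : F, t * t * Q f + t * QuadraticMap.polar Q f x = 0 := by
      intro x hx t
      obtain ⟨a, ha0, ha1⟩ := exists_dual f x hx
      have h := Hiso (t • a) (by simp [ha0]) x
      simpa [LinearMap.smul_apply, ha1, smul_eq_mul] using h
    by_cases hdim1 : Module.finrank F V = 1
    · exact Or.inr (Or.inl hdim1)
    by_cases hfr : Q f = 0 ∧ ∀ x, QuadraticMap.polar Q f x = 0
    · refine Or.inl ⟨hfr.1, le_antisymm hradle ?_⟩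
      rw [Submodule.span_le, Set.singleton_subset_iff]
      refine LinearMap.mem_ker.mpr ?_
      ext y
      simpa using hfr.2 y
    push_neg at hfr
    have hV : Nontrivial V := ⟨f, 0, hf⟩
    have hd1 : 0 < Module.finrank F V := Module.finrank_pos
    have hd2 : 2 ≤ Module.finrank F V := by omega
    have hspan_ne : Submodule.span F {f} ≠ ⊤ := by
      intro h
      have h1 := finrank_span_singleton (K := F) hf
      rw [h, finrank_top] at h1
      omega
    obtain ⟨x₀, hx₀⟩ : ∃ x, x ∉ Submodule.span F {f} := by
      by_contra h
      push_neg at h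
      exact hspan_ne (eq_top_iff.mpr fun x _ => h x)
    have hQB : ∀ x, x ∉ Submodule.span F {f} → QuadraticMap.polar Q f x = - Q f := by
      intro x hx
      have := key x hx 1
      linear_combination this
    have hQf : Q f ≠ 0 := by
      intro hQ
      obtain ⟨y, hy⟩ := hfr hQ
      by_cases hys : y ∈ Submodule.span F {f}
      · obtain ⟨c, rfl⟩ := Submodule.mem_span_singleton.mp hys
        apply hy
        rw [QuadraticMap.polar_smul_right, QuadraticMap.polar_self, hQ]
        simp
      · exact hy (by rw [hQB y hys, hQ, neg_zero])
    have hF2 : ∀ t : F, t = 0 ∨ t = 1 := by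
      intro t
      by_contra hcon
      push_neg at hcon
      have hk := key x₀ hx₀ t
      rw [hQB x₀ hx₀] at hk
      have h5 : t * (t - 1) * Q f = 0 := by linear_combination hk
      rcases mul_eq_zero.mp h5 with h6 | h6
      · rcases mul_eq_zero.mp h6 with h7 | h7
        · exact hcon.1 h7
        · exact hcon.2 (by linear_combination h7)
      · exact hQf h6
    have hcard : Cardinal.mk F = 2 := by
      rw [Cardinal.mk_eq_two_iff]
      refine ⟨0, 1, zero_ne_one, ?_⟩
      ext c
      simp only [Set.mem_insert_iff, Set.mem_singleton_iff, Set.mem_univ, iff_true]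
      exact hF2 c
    have hdim2 : Module.finrank F V = 2 := by
      by_contra hne
      have h3 : 3 ≤ Module.finrank F V := by omega
      have hx0ne : x₀ ≠ 0 := fun h => hx₀ (h ▸ Submodule.zero_mem _)
      have hsle : Module.finrank F
          ↥(Submodule.span F {f} ⊔ Submodule.span F {x₀}) ≤ 2 := by
        have hh := Submodule.finrank_sup_add_finrank_inf_eq
          (Submodule.span F {f}) (Submodule.span F {x₀})
        have h1 := finrank_span_singleton (K := F) hf
        have h2 := finrank_span_singleton (K := F) hx0ne
        omega
      have hne_top : (Submodule.span F {f} ⊔ Submodule.span F {x₀}) ≠ ⊤ := by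
        intro h
        rw [h, finrank_top] at hsle
        omega
      obtain ⟨y, hy⟩ : ∃ y, y ∉ Submodule.span F {f} ⊔ Submodule.span F {x₀} := by
        by_contra h
        push_neg at h
        exact hne_top (eq_top_iff.mpr fun x _ => h x)
      have hyf : y ∉ Submodule.span F {f} := fun h => hy (Submodule.mem_sup_left h)
      have hxy : x₀ + y ∉ Submodule.span F {f} := by
        intro h
        apply hy
        have hyy : y = (x₀ + y) - x₀ := by abel
        rw [hyy]
        exact Submodule.sub_mem _ (Submodule.mem_sup_left h)
          (Submodule.mem_sup_right (Submodule.mem_span_singleton_self x₀))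
      have hadd : QuadraticMap.polar Q f (x₀ + y) =
          QuadraticMap.polar Q f x₀ + QuadraticMap.polar Q f y :=
        QuadraticMap.polar_add_right Q f x₀ y
      rw [hQB _ hxy, hQB _ hx₀, hQB _ hyf] at hadd
      exact hQf (by linear_combination hadd)
    have hrad0 : Module.finrank F ↥(LinearMap.ker Q.polarBilin) = 0 := by
      have hbot : LinearMap.ker Q.polarBilin = ⊥ := by
        rw [eq_bot_iff]
        intro v hv
        obtain ⟨c, rfl⟩ := Submodule.mem_span_singleton.mp (hradle hv)
        rcases eq_or_ne c 0 with rfl | hc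
        · simp
        · exfalso
          have hfmem : f ∈ LinearMap.ker Q.polarBilin := by
            have h := (LinearMap.ker Q.polarBilin).smul_mem c⁻¹ hv
            rwa [smul_smul, inv_mul_cancel₀ hc, one_smul] at h
          have hB0 : QuadraticMap.polar Q f x₀ = 0 := by
            have h := LinearMap.mem_ker.mp hfmem
            have h2 := congrArg (fun g : Module.Dual F V => g x₀) h
            simpa using h2
          rw [hQB x₀ hx₀] at hB0
          exact hQf (by linear_combination -hB0)
      rw [hbot]
      exact finrank_bot F V
    exact Or.inr (Or.inr ⟨hdim2, hQf, hrad0, hcard⟩)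
  · intro h φ hφ
    obtain ⟨a, ha, rfl⟩ := hφ
    rcases h with ⟨hQ0, hker⟩ | hdim1 | ⟨hdim2, hQf, hrad0, hcard⟩
    · have hfrad : ∀ x, QuadraticMap.polar Q f x = 0 := by
        intro x
        have hfm : f ∈ LinearMap.ker Q.polarBilin :=
          hker ▸ Submodule.mem_span_singleton_self f
        have h2 := congrArg (fun g : Module.Dual F V => g x) (LinearMap.mem_ker.mp hfm)
        simpa using h2
      refine ⟨delta_bij a f ha, fun x => ?_, fun x hx => ?_⟩
      · rw [deltaMap_apply, Q_delta, hQ0, hfrad]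
        ring
      · rw [deltaMap_apply]
        rw [hker] at hx
        obtain ⟨c, rfl⟩ := Submodule.mem_span_singleton.mp hx
        simp [map_smul, ha]
    · have hstop : Submodule.span F {f} = ⊤ :=
        Submodule.eq_top_of_finrank_eq (by rw [finrank_span_singleton hf, hdim1])
      have haz : ∀ x, a x = 0 := by
        intro x
        have hx : x ∈ Submodule.span F {f} := hstop ▸ Submodule.mem_top
        obtain ⟨c, rfl⟩ := Submodule.mem_span_singleton.mp hx
        simp [map_smul, ha]
      exact ⟨delta_bij a f ha,
        fun x => by rw [deltaMap_apply, haz x, zero_smul, add_zero],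
        fun x _ => by rw [deltaMap_apply, haz x, zero_smul, add_zero]⟩
    · have hkerbot : LinearMap.ker Q.polarBilin = ⊥ := Submodule.finrank_eq_zero.mp hrad0
      have hF2 : ∀ c : F, c = 0 ∨ c = 1 := by
        obtain ⟨x, y, hxy, huniv⟩ := Cardinal.mk_eq_two_iff.mp hcard
        have hmem : ∀ c : F, c = x ∨ c = y := by
          intro c
          have : c ∈ ({x, y} : Set F) := huniv ▸ Set.mem_univ c
          simpa using this
        intro c
        rcases hmem c with hc | hc
        · rcases hmem 0 with h0 | h0
          · exact Or.inl (hc.trans h0.symm)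
          · rcases hmem 1 with h1 | h1
            · exact Or.inr (hc.trans h1.symm)
            · exact absurd (h0.trans h1.symm) zero_ne_one
        · rcases hmem 0 with h0 | h0
          · rcases hmem 1 with h1 | h1
            · exact absurd (h0.trans h1.symm) zero_ne_one
            · exact Or.inr (hc.trans h1.symm)
          · exact Or.inl (hc.trans h0.symm)
      have htwo : (1 : F) + 1 = 0 := by
        rcases hF2 (1 + 1) with h2 | h2
        · exact h2
        · exact absurd (by linear_combination h2 : (1 : F) = 0) one_ne_zero
      have hQf1 : Q f = 1 := (hF2 (Q f)).resolve_left hQf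
      have hφne : Q.polarBilin f ≠ 0 := by
        intro h2
        exact hf (by simpa [hkerbot] using (LinearMap.mem_ker.mpr h2 :
          f ∈ LinearMap.ker Q.polarBilin))
      have hkerφ := Module.Dual.finrank_ker_add_one_of_ne_zero hφne
      have hpolarff : QuadraticMap.polar Q f f = 0 := by
        rw [QuadraticMap.polar_self, two_nsmul]
        linear_combination Q f * htwo
      have hfker : f ∈ LinearMap.ker (Q.polarBilin f) := by
        rw [LinearMap.mem_ker]
        simpa using hpolarff
      have hspan_eq : Submodule.span F {f} = LinearMap.ker (Q.polarBilin f) := by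
        apply Submodule.eq_of_le_of_finrank_eq
        · rw [Submodule.span_le, Set.singleton_subset_iff]
          exact hfker
        · rw [finrank_span_singleton hf]
          omega
      refine ⟨delta_bij a f ha, fun x => ?_, fun x hx => ?_⟩
      · rw [deltaMap_apply, Q_delta]
        rcases hF2 (a x) with h0 | h1
        · rw [h0]; ring
        · have hxs : x ∉ Submodule.span F {f} := by
            intro hxs
            obtain ⟨c, hc⟩ := Submodule.mem_span_singleton.mp hxs
            rw [← hc, map_smul, ha, smul_eq_mul, mul_zero] at h1
            exact one_ne_zero h1.symm
          have hBx : QuadraticMap.polar Q f x ≠ 0 := by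
            intro hB
            apply hxs
            rw [hspan_eq, LinearMap.mem_ker]
            simpa using hB
          have hB1 : QuadraticMap.polar Q f x = 1 := (hF2 _).resolve_left hBx
          rw [h1, hB1, hQf1]
          linear_combination htwo
      · rw [hkerbot] at hx
        simp only [Submodule.mem_bot] at hx
        rw [hx]
        simp [deltaMap_apply]
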